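/- Let S ≥ 0 and γC ≥ γI > 0, β > 0, θ ∈ [0,1]. The 2×2 matrix [[(1-θ)βS - γI, (1-θ)βS],[θβS, θβS - γC]] has two real eigenvalues λ2 ≤ λ3 given by λ_{2,3} = ½(βS - γI - γC ∓ √((βS - (γC-γI))² + 4(1-θ)β(γC-γI)S)), and λ2 < 0 for all S ≥ 0 (assuming S > 0 or θ < 1 to avoid degeneracy), while λ3 < 0 iff S < 1/R0, λ3 = 0 iff S = 1/R0, and λ3 > 0 iff S > 1/R0, where R0 = β((1-θ)/γI + θ/γC). -/
import Mathlib

set_option maxHeartbeats 1000000 in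
/-- For `S ≥ 0`, `0 < γI ≤ γC`, `β > 0`, `θ ∈ [0,1]`, the matrix
`[[(1-θ)βS - γI, (1-θ)βS],[θβS, θβS - γC]]` has two real eigenvalues
`lam2 ≤ lam3` given by
`λ_{2,3} = ½(βS - γI - γC ∓ √((βS - (γC-γI))² + 4(1-θ)β(γC-γI)S))`;
`lam2 < 0` always (assuming `S > 0` or `θ < 1`), and the sign of `lam3` is
determined by the position of `S` relative to `1/R0`,
`R0 = β((1-θ)/γI + θ/γC)`. Here `λ` is an eigenvalue of `M` iff
`det(M - λ·1) = 0`. -/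
theorem stmt_13 (β γI γC θ S : ℝ) (hβ : 0 < β) (hγI : 0 < γI) (hIC : γI ≤ γC)
    (hθ0 : 0 ≤ θ) (hθ1 : θ ≤ 1) (hS : 0 ≤ S)
    (M : Matrix (Fin 2) (Fin 2) ℝ)
    (hM : M = !![(1 - θ) * β * S - γI, (1 - θ) * β * S;
                 θ * β * S, θ * β * S - γC])
    (lam2 lam3 : ℝ)
    (hlam2 : lam2 = (1 / 2) * (β * S - γI - γC -
      Real.sqrt ((β * S - (γC - γI)) ^ 2 + 4 * (1 - θ) * β * (γC - γI) * S)))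
    (hlam3 : lam3 = (1 / 2) * (β * S - γI - γC +
      Real.sqrt ((β * S - (γC - γI)) ^ 2 + 4 * (1 - θ) * β * (γC - γI) * S))) :
    (M - lam2 • 1).det = 0 ∧ (M - lam3 • 1).det = 0 ∧ lam2 ≤ lam3 ∧
    ((0 < S ∨ θ < 1) → lam2 < 0) ∧
    (lam3 < 0 ↔ S < 1 / (β * ((1 - θ) / γI + θ / γC))) ∧
    (lam3 = 0 ↔ S = 1 / (β * ((1 - θ) / γI + θ / γC))) ∧
    (0 < lam3 ↔ 1 / (β * ((1 - θ) / γI + θ / γC)) < S) := by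
  have hγC : 0 < γC := lt_of_lt_of_le hγI hIC
  set D : ℝ := (β * S - (γC - γI)) ^ 2 + 4 * (1 - θ) * β * (γC - γI) * S with hD
  have hDnn : 0 ≤ D := by
    have h1 : 0 ≤ (β * S - (γC - γI)) ^ 2 := sq_nonneg _
    have h2 : 0 ≤ 4 * (1 - θ) * β * (γC - γI) * S := by
      have hθ' : (0:ℝ) ≤ 1 - θ := by linarith
      have hCI : (0:ℝ) ≤ γC - γI := by linarith
      exact mul_nonneg (mul_nonneg (mul_nonneg (mul_nonneg (by norm_num) hθ') hβ.le) hCI) hS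
    linarith
  set s : ℝ := Real.sqrt D with hsdef
  have hs0 : 0 ≤ s := Real.sqrt_nonneg _
  have hs2 : s ^ 2 = D := Real.sq_sqrt hDnn
  -- determinants
  have hdet : ∀ lam : ℝ, (M - lam • 1).det =
      ((1 - θ) * β * S - γI - lam) * (θ * β * S - γC - lam)
        - (1 - θ) * β * S * (θ * β * S) := by
    intro lam
    subst hM
    have h : (!![(1 - θ) * β * S - γI, (1 - θ) * β * S;
        θ * β * S, θ * β * S - γC] : Matrix (Fin 2) (Fin 2) ℝ) - lam • 1 =
        !![(1 - θ) * β * S - γI - lam, (1 - θ) * β * S;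
           θ * β * S, θ * β * S - γC - lam] := by
      ext i j
      fin_cases i <;> fin_cases j <;>
        simp [Matrix.one_apply, Matrix.smul_apply, Matrix.sub_apply]
    rw [h, Matrix.det_fin_two_of]
  have hdet2 : (M - lam2 • 1).det = 0 := by
    rw [hdet, hlam2]
    linear_combination (1 / 4 : ℝ) * hs2
  have hdet3 : (M - lam3 • 1).det = 0 := by
    rw [hdet, hlam3]
    linear_combination (1 / 4 : ℝ) * hs2
  have hle : lam2 ≤ lam3 := by rw [hlam2, hlam3]; linarith
  -- lam2 < 0
  have hl2 : lam2 < 0 := by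
    rw [hlam2]
    rcases lt_or_ge (β * S - γI - γC) 0 with ht | ht
    · linarith
    · have hβS : γI + γC ≤ β * S := by linarith
      have hAge : γI ≤ (1 - θ) * γC + θ * γI := by
        nlinarith [mul_nonneg (sub_nonneg.mpr hθ1) (sub_nonneg.mpr hIC)]
      have h1 : γI * (γI + γC) ≤ ((1 - θ) * γC + θ * γI) * (β * S) :=
        mul_le_mul hAge hβS (by linarith) (by linarith)
      have hDt : (β * S - γI - γC) ^ 2 < D := by rw [hD]; nlinarith
      nlinarith
  -- product of eigenvalues
  have hprod : lam2 * lam3 = γI * γC - β * S * ((1 - θ) * γC + θ * γI) := by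
    rw [hlam2, hlam3]
    linear_combination (-(1 : ℝ) / 4) * hs2
  have hA : 0 < (1 - θ) * γC + θ * γI := by
    nlinarith [mul_nonneg (sub_nonneg.mpr hθ1) (sub_nonneg.mpr hIC)]
  have hβA : 0 < β * ((1 - θ) * γC + θ * γI) := mul_pos hβ hA
  have hr : 1 / (β * ((1 - θ) / γI + θ / γC)) =
      γI * γC / (β * ((1 - θ) * γC + θ * γI)) := by
    have h2 : (1 - θ) / γI + θ / γC = ((1 - θ) * γC + θ * γI) / (γI * γC) := by
      field_simp
    rw [h2]
    rw [div_eq_div_iff (by positivity) (ne_of_gt hβA)]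
    field_simp
  refine ⟨hdet2, hdet3, hle, fun _ => hl2, ?_, ?_, ?_⟩
  · rw [hr, lt_div_iff₀ hβA]
    constructor
    · intro h
      have hp : 0 < lam2 * lam3 := mul_pos_of_neg_of_neg hl2 h
      rw [hprod] at hp
      nlinarith
    · intro h
      have hp : 0 < lam2 * lam3 := by rw [hprod]; nlinarith
      nlinarith
  · rw [hr, eq_div_iff (ne_of_gt hβA)]
    constructor
    · intro h
      have hp : lam2 * lam3 = 0 := by rw [h]; ring
      rw [hprod] at hp
      nlinarith
    · intro h
      have hp : lam2 * lam3 = 0 := by rw [hprod]; nlinarith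
      rcases mul_eq_zero.mp hp with h' | h'
      · exact absurd h' (ne_of_lt hl2)
      · exact h'
  · rw [hr, div_lt_iff₀ hβA]
    constructor
    · intro h
      have hp : lam2 * lam3 < 0 := mul_neg_of_neg_of_pos hl2 h
      rw [hprod] at hp
      nlinarith
    · intro h
      have hp : lam2 * lam3 < 0 := by rw [hprod]; nlinarith
      nlinarith
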